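/- Let b ≥ 2, 0 < α < 1, and k ≥ 0 with b^k ≤ n. Then Σ_{j=0}^k b^{j(1−α)/2} ≤ n^{(1−α)/2}/(1 − b^{(α−1)/2}). Consequently, if μ̂ = (1/n)Σ_{j=0}^k Σ_{ℓ=1}^{a_j} b^j μ̂_{jℓ} with digits a_j ∈ {0,…,b−1}, n = Σ_j a_j b^j, and Var(μ̂_{jℓ}) ≤ C·b^{−j(1+α)} for all j, ℓ, then Var(μ̂) ≤ C(b−1)²/(1−b^{(α−1)/2})² · n^{−1−α}. -/

import Mathlib

open MeasureTheory ProbabilityTheory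

section Helpers

variable {Ω : Type} [MeasurableSpace Ω] {μ : Measure Ω}

lemma sqrt_variance_eq (X : Ω → ℝ) (μ : Measure Ω) :
    Real.sqrt (variance X μ) = (eLpNorm (fun ω => X ω - μ[X]) 2 μ).toReal := by
  have h : evariance X μ = eLpNorm (fun ω => X ω - μ[X]) 2 μ ^ 2 := by
    rw [eLpNorm_eq_lintegral_rpow_enorm_toReal two_ne_zero ENNReal.ofNat_ne_top, evariance]
    rw [← ENNReal.rpow_natCast _ 2, ← ENNReal.rpow_mul]
    norm_num
  rw [variance, h, ENNReal.toReal_pow, Real.sqrt_sq ENNReal.toReal_nonneg]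

lemma sqrt_variance_sum_le [IsProbabilityMeasure μ] {ι : Type*} (s : Finset ι)
    (X : ι → Ω → ℝ) (hX : ∀ i ∈ s, MemLp (X i) 2 μ) :
    Real.sqrt (variance (fun ω => ∑ i ∈ s, X i ω) μ)
      ≤ ∑ i ∈ s, Real.sqrt (variance (X i) μ) := by
  have hint : ∀ i ∈ s, Integrable (X i) μ := fun i hi => (hX i hi).integrable one_le_two
  have hμ : μ[fun ω => ∑ i ∈ s, X i ω] = ∑ i ∈ s, μ[X i] := integral_finset_sum s hint
  rw [sqrt_variance_eq]
  have hfun : (fun ω => (∑ i ∈ s, X i ω) - μ[fun ω => ∑ i ∈ s, X i ω])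
      = fun ω => ∑ i ∈ s, (X i ω - μ[X i]) := by
    funext ω; rw [hμ, Finset.sum_sub_distrib]
  rw [hfun]
  have hmeas : ∀ i ∈ s, AEStronglyMeasurable (fun ω => X i ω - μ[X i]) μ := fun i hi =>
    ((hX i hi).sub (memLp_const _)).aestronglyMeasurable
  have hle := eLpNorm_sum_le (μ := μ) (p := 2) hmeas one_le_two
  have hfin : ∀ i ∈ s, eLpNorm (fun ω => X i ω - μ[X i]) 2 μ ≠ ⊤ := fun i hi =>
    ((hX i hi).sub (memLp_const _)).eLpNorm_ne_top
  calc (eLpNorm (fun ω => ∑ i ∈ s, (X i ω - μ[X i])) 2 μ).toReal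
      ≤ (∑ i ∈ s, eLpNorm (fun ω => X i ω - μ[X i]) 2 μ).toReal := by
        have heq : (fun ω => ∑ i ∈ s, (X i ω - μ[X i]))
            = ∑ i ∈ s, fun ω => X i ω - μ[X i] := by funext ω; simp
        rw [heq]
        refine ENNReal.toReal_mono ?_ hle
        exact (ENNReal.sum_lt_top.2 fun i hi => (hfin i hi).lt_top).ne
    _ = ∑ i ∈ s, (eLpNorm (fun ω => X i ω - μ[X i]) 2 μ).toReal := ENNReal.toReal_sum hfin
    _ = ∑ i ∈ s, Real.sqrt (variance (X i) μ) := by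
        refine Finset.sum_congr rfl fun i hi => ?_
        rw [sqrt_variance_eq]

end Helpers

lemma geom_bound (b : ℕ) (hb : 2 ≤ b) (α : ℝ) (hα : 0 < α) (hα1 : α < 1)
    (k : ℕ) (n : ℕ) (hbk : (b : ℝ) ^ k ≤ (n : ℝ)) :
    (∑ j ∈ Finset.range (k + 1), ((b : ℝ) ^ (((1 : ℝ) - α) / 2)) ^ j)
      ≤ (n : ℝ) ^ (((1 : ℝ) - α) / 2) / (1 - (b : ℝ) ^ ((α - 1) / 2)) := by
  have hb1 : (1 : ℝ) < b := by exact_mod_cast Nat.lt_of_lt_of_le one_lt_two hb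
  have hb0 : (0 : ℝ) < b := by linarith
  set r : ℝ := (b : ℝ) ^ (((1 : ℝ) - α) / 2) with hr_def
  have hr : 1 < r := by
    rw [hr_def]
    exact (Real.one_lt_rpow_iff_of_pos hb0).2 (Or.inl ⟨hb1, by linarith⟩)
  have hr0 : r ≠ 0 := by positivity
  have hinv : (b : ℝ) ^ ((α - 1) / 2) = r⁻¹ := by
    have h : (α - 1) / 2 = -(((1 : ℝ) - α) / 2) := by ring
    rw [h, Real.rpow_neg hb0.le, hr_def]
  have hrinv : r⁻¹ < 1 := inv_lt_one_of_one_lt₀ hr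
  have hd : 0 < 1 - r⁻¹ := by linarith
  rw [hinv]
  have hsum : ∑ j ∈ Finset.range (k + 1), r ^ j = (r ^ (k + 1) - 1) / (r - 1) :=
    geom_sum_eq (ne_of_gt hr) _
  have hstep : (r ^ (k + 1) - 1) / (r - 1) ≤ r ^ k / (1 - r⁻¹) := by
    rw [div_le_div_iff₀ (by linarith) hd]
    have h1 : r ^ (k + 1) = r ^ k * r := pow_succ r k
    have hinvpos : 0 < r⁻¹ := by positivity
    have h2 : r * r⁻¹ = 1 := mul_inv_cancel₀ hr0
    have h3 : (0:ℝ) < r ^ k := pow_pos (by linarith) k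
    nlinarith [h3, h2, hinvpos]
  have hrk : r ^ k ≤ (n : ℝ) ^ (((1 : ℝ) - α) / 2) := by
    have h : r ^ k = ((b : ℝ) ^ k) ^ (((1 : ℝ) - α) / 2) := by
      rw [hr_def, ← Real.rpow_natCast ((b:ℝ) ^ (((1:ℝ)-α)/2)) k, ← Real.rpow_natCast (b:ℝ) k,
        ← Real.rpow_mul hb0.le, ← Real.rpow_mul hb0.le, mul_comm]
    rw [h]
    exact Real.rpow_le_rpow (by positivity) hbk (by linarith)
  calc ∑ j ∈ Finset.range (k + 1), r ^ j = (r ^ (k + 1) - 1) / (r - 1) := hsum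
    _ ≤ r ^ k / (1 - r⁻¹) := hstep
    _ ≤ (n : ℝ) ^ (((1 : ℝ) - α) / 2) / (1 - r⁻¹) := by gcongr

/-- Geometric-sum bound and variance-rate extension from sample sizes `b^m`
to arbitrary `n` via the base-`b` digit decomposition, for rate `0 < α < 1`. -/
theorem variance_rate_extension (b : ℕ) (hb : 2 ≤ b) (α : ℝ) (hα : 0 < α) (hα1 : α < 1)
    (k : ℕ) (n : ℕ) (hbk : (b : ℝ) ^ k ≤ (n : ℝ)) :
    ((∑ j ∈ Finset.range (k + 1), ((b : ℝ) ^ (((1 : ℝ) - α) / 2)) ^ j)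
      ≤ (n : ℝ) ^ (((1 : ℝ) - α) / 2) / (1 - (b : ℝ) ^ ((α - 1) / 2))) ∧
    (∀ {Ω : Type} (_ : MeasureSpace Ω), IsProbabilityMeasure (ℙ : Measure Ω) →
      ∀ (a : ℕ → ℕ), (∀ j, j ≤ k → a j ≤ b - 1) → 1 ≤ a k →
        (n : ℕ) = ∑ j ∈ Finset.range (k + 1), a j * b ^ j →
      ∀ (Y : ℕ → ℕ → Ω → ℝ), (∀ j ℓ, MemLp (Y j ℓ) 2 ℙ) →
      ∀ C : ℝ, 0 ≤ C →
        (∀ j ℓ, j ≤ k → ℓ < a j →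
          variance (Y j ℓ) ℙ ≤ C * (b : ℝ) ^ (-(j : ℝ) * (1 + α))) →
        variance (fun ω => (1 / (n : ℝ)) * ∑ j ∈ Finset.range (k + 1),
            ∑ ℓ ∈ Finset.range (a j), (b : ℝ) ^ j * Y j ℓ ω) ℙ
          ≤ C * ((b : ℝ) - 1) ^ 2 / (1 - (b : ℝ) ^ ((α - 1) / 2)) ^ 2
            * (n : ℝ) ^ (-(1 : ℝ) - α)) := by
  have hb1 : (1 : ℝ) < b := by exact_mod_cast Nat.lt_of_lt_of_le one_lt_two hb
  have hb0 : (0 : ℝ) < b := by linarith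
  set r : ℝ := (b : ℝ) ^ (((1 : ℝ) - α) / 2) with hr_def
  have hr : 1 < r := by
    rw [hr_def]
    exact (Real.one_lt_rpow_iff_of_pos hb0).2 (Or.inl ⟨hb1, by linarith⟩)
  have hinv : (b : ℝ) ^ ((α - 1) / 2) = r⁻¹ := by
    have h : (α - 1) / 2 = -(((1 : ℝ) - α) / 2) := by ring
    rw [h, Real.rpow_neg hb0.le, hr_def]
  have hrinv : r⁻¹ < 1 := inv_lt_one_of_one_lt₀ hr
  set d : ℝ := 1 - (b : ℝ) ^ ((α - 1) / 2) with hd_def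
  have hd : 0 < d := by rw [hd_def, hinv]; linarith
  have hgeom := geom_bound b hb α hα hα1 k n hbk
  refine ⟨hgeom, ?_⟩
  intro Ω _ hprob a ha hak hn Y hY C hC hvar
  have hn1 : (1 : ℝ) ≤ (n : ℝ) := le_trans (one_le_pow₀ hb1.le) hbk
  have hn0 : (0 : ℝ) < (n : ℝ) := by linarith
  -- key pointwise bound
  have key : ∀ j ℓ, j ≤ k → ℓ < a j →
      Real.sqrt (variance (fun ω => (b:ℝ)^j * Y j ℓ ω) ℙ) ≤ Real.sqrt C * r ^ j := by
    intro j ℓ hj hℓ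
    rw [variance_const_mul, Real.sqrt_mul (sq_nonneg _), Real.sqrt_sq (by positivity)]
    have h1 : Real.sqrt (variance (Y j ℓ) ℙ) ≤ Real.sqrt (C * (b:ℝ)^(-(j:ℝ)*(1+α))) :=
      Real.sqrt_le_sqrt (hvar j ℓ hj hℓ)
    have hsq : Real.sqrt ((b:ℝ)^(-(j:ℝ)*(1+α))) = (b:ℝ)^((-(j:ℝ)*(1+α))/2) := by
      rw [Real.sqrt_eq_rpow, ← Real.rpow_mul hb0.le]
      congr 1; ring
    have h2 : Real.sqrt (C * (b:ℝ)^(-(j:ℝ)*(1+α)))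
        = Real.sqrt C * (b:ℝ)^((-(j:ℝ)*(1+α))/2) := by
      rw [Real.sqrt_mul hC, hsq]
    have h3 : (b:ℝ)^(j:ℕ) * (b:ℝ)^((-(j:ℝ)*(1+α))/2) = r ^ j := by
      rw [← Real.rpow_natCast (b:ℝ) j, ← Real.rpow_add hb0, hr_def,
          ← Real.rpow_natCast ((b:ℝ)^(((1:ℝ)-α)/2)) j, ← Real.rpow_mul hb0.le]
      congr 1; ring
    calc (b:ℝ)^j * Real.sqrt (variance (Y j ℓ) ℙ)
        ≤ (b:ℝ)^j * (Real.sqrt C * (b:ℝ)^((-(j:ℝ)*(1+α))/2)) := by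
          rw [← h2]; exact mul_le_mul_of_nonneg_left h1 (by positivity)
      _ = Real.sqrt C * r ^ j := by
          rw [mul_comm (Real.sqrt C) _, ← mul_assoc, h3, mul_comm]
  -- MemLp facts
  have hmem1 : ∀ j ℓ, MemLp (fun ω => (b:ℝ)^j * Y j ℓ ω) 2 ℙ := fun j ℓ =>
    (hY j ℓ).const_mul _
  have hmemZ : ∀ j, MemLp (fun ω => ∑ ℓ ∈ Finset.range (a j), (b:ℝ)^j * Y j ℓ ω) 2 ℙ :=
    fun j => memLp_finset_sum _ (fun ℓ _ => hmem1 j ℓ)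
  -- bound √Var of inner sums
  have hZ : ∀ j, j ≤ k →
      Real.sqrt (variance (fun ω => ∑ ℓ ∈ Finset.range (a j), (b:ℝ)^j * Y j ℓ ω) ℙ)
        ≤ ((b:ℝ) - 1) * (Real.sqrt C * r ^ j) := by
    intro j hj
    calc Real.sqrt (variance (fun ω => ∑ ℓ ∈ Finset.range (a j), (b:ℝ)^j * Y j ℓ ω) ℙ)
        ≤ ∑ ℓ ∈ Finset.range (a j),
            Real.sqrt (variance (fun ω => (b:ℝ)^j * Y j ℓ ω) ℙ) :=
          sqrt_variance_sum_le _ _ (fun ℓ _ => hmem1 j ℓ)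
      _ ≤ ∑ ℓ ∈ Finset.range (a j), Real.sqrt C * r ^ j := by
          refine Finset.sum_le_sum fun ℓ hℓ => key j ℓ hj (Finset.mem_range.1 hℓ)
      _ = (a j : ℝ) * (Real.sqrt C * r ^ j) := by
          rw [Finset.sum_const, Finset.card_range, nsmul_eq_mul]
      _ ≤ ((b:ℝ) - 1) * (Real.sqrt C * r ^ j) := by
          have hcast : (a j : ℝ) ≤ (b:ℝ) - 1 := by
            have := ha j hj
            have h1b : 1 ≤ b := le_trans one_le_two hb
            have : (a j : ℝ) ≤ ((b - 1 : ℕ) : ℝ) := by exact_mod_cast this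
            rwa [Nat.cast_sub h1b, Nat.cast_one] at this
          have hpos : (0:ℝ) ≤ Real.sqrt C * r ^ j := by positivity
          exact mul_le_mul_of_nonneg_right hcast hpos
  -- √Var of total sum
  set B : ℝ := ((b:ℝ) - 1) * Real.sqrt C * ((n:ℝ) ^ (((1:ℝ) - α)/2) / d) with hB_def
  have hS : Real.sqrt (variance (fun ω => ∑ j ∈ Finset.range (k + 1),
      ∑ ℓ ∈ Finset.range (a j), (b:ℝ)^j * Y j ℓ ω) ℙ) ≤ B := by
    calc Real.sqrt (variance (fun ω => ∑ j ∈ Finset.range (k + 1),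
          ∑ ℓ ∈ Finset.range (a j), (b:ℝ)^j * Y j ℓ ω) ℙ)
        ≤ ∑ j ∈ Finset.range (k + 1), Real.sqrt (variance
            (fun ω => ∑ ℓ ∈ Finset.range (a j), (b:ℝ)^j * Y j ℓ ω) ℙ) :=
          sqrt_variance_sum_le _ _ (fun j _ => hmemZ j)
      _ ≤ ∑ j ∈ Finset.range (k + 1), ((b:ℝ) - 1) * (Real.sqrt C * r ^ j) :=
          Finset.sum_le_sum fun j hj => hZ j (Nat.lt_succ_iff.1 (Finset.mem_range.1 hj))
      _ = ((b:ℝ) - 1) * Real.sqrt C * ∑ j ∈ Finset.range (k + 1), r ^ j := by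
          rw [Finset.mul_sum]; refine Finset.sum_congr rfl fun j _ => by ring
      _ ≤ B := by
          rw [hB_def]
          have hb1' : (0:ℝ) ≤ (b:ℝ) - 1 := by linarith
          have := hgeom
          rw [← hd_def] at this
          exact mul_le_mul_of_nonneg_left this (by positivity)
  -- conclude
  have hVarS : variance (fun ω => ∑ j ∈ Finset.range (k + 1),
      ∑ ℓ ∈ Finset.range (a j), (b:ℝ)^j * Y j ℓ ω) ℙ ≤ B ^ 2 := by
    have hv := variance_nonneg (fun ω => ∑ j ∈ Finset.range (k + 1),
      ∑ ℓ ∈ Finset.range (a j), (b:ℝ)^j * Y j ℓ ω) ℙ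
    nlinarith [hS, Real.sq_sqrt hv, Real.sqrt_nonneg (variance (fun ω => ∑ j ∈ Finset.range (k + 1),
      ∑ ℓ ∈ Finset.range (a j), (b:ℝ)^j * Y j ℓ ω) ℙ)]
  have hB2 : B ^ 2 = ((b:ℝ) - 1) ^ 2 * C * (n:ℝ) ^ ((1:ℝ) - α) / d ^ 2 := by
    rw [hB_def]
    have h1 : (Real.sqrt C) ^ 2 = C := Real.sq_sqrt hC
    have h2 : ((n:ℝ) ^ (((1:ℝ) - α)/2)) ^ 2 = (n:ℝ) ^ ((1:ℝ) - α) := by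
      rw [← Real.rpow_natCast ((n:ℝ) ^ (((1:ℝ) - α)/2)) 2, ← Real.rpow_mul hn0.le]
      norm_num
    rw [mul_pow, mul_pow, div_pow, h1, h2]
    ring
  rw [variance_const_mul]
  have hfinal : (1/(n:ℝ))^2 * (((b:ℝ) - 1) ^ 2 * C * (n:ℝ) ^ ((1:ℝ) - α) / d ^ 2)
      = C * ((b:ℝ) - 1) ^ 2 / d ^ 2 * (n:ℝ) ^ (-(1:ℝ) - α) := by
    have hpow : (n:ℝ) ^ (-(1:ℝ) - α) = (n:ℝ) ^ ((1:ℝ) - α) / (n:ℝ) ^ (2:ℕ) := by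
      rw [← Real.rpow_natCast (n:ℝ) 2, ← Real.rpow_sub hn0]
      congr 1; push_cast; ring
    rw [hpow]
    field_simp
  calc (1/(n:ℝ))^2 * variance (fun ω => ∑ j ∈ Finset.range (k + 1),
        ∑ ℓ ∈ Finset.range (a j), (b:ℝ)^j * Y j ℓ ω) ℙ
      ≤ (1/(n:ℝ))^2 * B ^ 2 := by
        exact mul_le_mul_of_nonneg_left hVarS (by positivity)
    _ = C * ((b:ℝ) - 1) ^ 2 / d ^ 2 * (n:ℝ) ^ (-(1:ℝ) - α) := by rw [hB2, hfinal]
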